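/- Let P ⊆ ℝ³ be the convex hull of the four points (0,0,0), (1,0,0), (0,1,0), (1,1,2). Then every lattice point of 3P is the sum of a lattice point of 2P and a lattice point of P; that is, 3P ∩ ℤ³ = (2P ∩ ℤ³) + (P ∩ ℤ³). -/

import Mathlib

open Pointwise

/-- The polytope of the final example of Section 4: the convex hull of
`(0,0,0), (1,0,0), (0,1,0), (1,1,2)` in `ℝ³`. -/
noncomputable def Pex : Set (Fin 3 → ℝ) :=
  convexHull ℝ {![0,0,0], ![1,0,0], ![0,1,0], ![1,1,2]}

lemma convex_Pex : Convex ℝ Pex := convex_convexHull ℝ _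

lemma two_smul_Pex : (2:ℝ) • Pex = Pex + Pex := by
  have h := convex_Pex.add_smul (zero_le_one) (zero_le_one)
  norm_num at h
  exact h

lemma three_smul_Pex : (3:ℝ) • Pex = (2:ℝ) • Pex + Pex := by
  have h := convex_Pex.add_smul (by norm_num : (0:ℝ) ≤ 2) (zero_le_one)
  norm_num at h
  exact h

lemma Pex_subset : Pex ⊆ {q : Fin 3 → ℝ | 0 ≤ q 2 ∧ q 2 ≤ 2*q 0 ∧ q 2 ≤ 2*q 1 ∧ 2*q 0 + 2*q 1 - q 2 ≤ 2} := by
  apply convexHull_min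
  · rintro v (rfl|rfl|rfl|rfl) <;> simp [Matrix.cons_val_zero, Matrix.cons_val_one, Matrix.cons_val_two] <;> norm_num
  · rintro u hu v hv a b ha hb hab
    simp only [Set.mem_setOf_eq, Pi.add_apply, Pi.smul_apply, smul_eq_mul] at *
    obtain ⟨u1,u2,u3,u4⟩ := hu
    obtain ⟨v1,v2,v3,v4⟩ := hv
    refine ⟨by nlinarith, by nlinarith, by nlinarith, by nlinarith⟩

lemma vP0 : (![0,0,0] : Fin 3 → ℝ) ∈ Pex := subset_convexHull ℝ _ (by simp)

lemma vP1 : (![1,0,0] : Fin 3 → ℝ) ∈ Pex := subset_convexHull ℝ _ (by simp)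

lemma vP2 : (![0,1,0] : Fin 3 → ℝ) ∈ Pex := subset_convexHull ℝ _ (by simp)

lemma vP3 : (![1,1,2] : Fin 3 → ℝ) ∈ Pex := subset_convexHull ℝ _ (by simp)


lemma m1_000 : (fun i => ((![0,0,0] : Fin 3 → ℤ) i : ℝ)) ∈ Pex := by
  have h : (fun i => ((![0,0,0] : Fin 3 → ℤ) i : ℝ)) = (![0,0,0] : Fin 3 → ℝ) := by
    funext i; fin_cases i <;> norm_num
  rw [h]; exact vP0

lemma m1_010 : (fun i => ((![0,1,0] : Fin 3 → ℤ) i : ℝ)) ∈ Pex := by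
  have h : (fun i => ((![0,1,0] : Fin 3 → ℤ) i : ℝ)) = (![0,1,0] : Fin 3 → ℝ) := by
    funext i; fin_cases i <;> norm_num
  rw [h]; exact vP2

lemma m1_100 : (fun i => ((![1,0,0] : Fin 3 → ℤ) i : ℝ)) ∈ Pex := by
  have h : (fun i => ((![1,0,0] : Fin 3 → ℤ) i : ℝ)) = (![1,0,0] : Fin 3 → ℝ) := by
    funext i; fin_cases i <;> norm_num
  rw [h]; exact vP1

lemma m1_112 : (fun i => ((![1,1,2] : Fin 3 → ℤ) i : ℝ)) ∈ Pex := by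
  have h : (fun i => ((![1,1,2] : Fin 3 → ℤ) i : ℝ)) = (![1,1,2] : Fin 3 → ℝ) := by
    funext i; fin_cases i <;> norm_num
  rw [h]; exact vP3

lemma m2_000 : (fun i => ((![0,0,0] : Fin 3 → ℤ) i : ℝ)) ∈ (2:ℝ) • Pex := by
  rw [two_smul_Pex]
  have h : (fun i => ((![0,0,0] : Fin 3 → ℤ) i : ℝ)) = (![0,0,0] : Fin 3 → ℝ) + ![0,0,0] := by
    funext i; fin_cases i <;> norm_num
  rw [h]; exact Set.add_mem_add vP0 vP0

lemma m2_010 : (fun i => ((![0,1,0] : Fin 3 → ℤ) i : ℝ)) ∈ (2:ℝ) • Pex := by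
  rw [two_smul_Pex]
  have h : (fun i => ((![0,1,0] : Fin 3 → ℤ) i : ℝ)) = (![0,0,0] : Fin 3 → ℝ) + ![0,1,0] := by
    funext i; fin_cases i <;> norm_num
  rw [h]; exact Set.add_mem_add vP0 vP2

lemma m2_020 : (fun i => ((![0,2,0] : Fin 3 → ℤ) i : ℝ)) ∈ (2:ℝ) • Pex := by
  rw [two_smul_Pex]
  have h : (fun i => ((![0,2,0] : Fin 3 → ℤ) i : ℝ)) = (![0,1,0] : Fin 3 → ℝ) + ![0,1,0] := by
    funext i; fin_cases i <;> norm_num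
  rw [h]; exact Set.add_mem_add vP2 vP2

lemma m2_100 : (fun i => ((![1,0,0] : Fin 3 → ℤ) i : ℝ)) ∈ (2:ℝ) • Pex := by
  rw [two_smul_Pex]
  have h : (fun i => ((![1,0,0] : Fin 3 → ℤ) i : ℝ)) = (![0,0,0] : Fin 3 → ℝ) + ![1,0,0] := by
    funext i; fin_cases i <;> norm_num
  rw [h]; exact Set.add_mem_add vP0 vP1

lemma m2_110 : (fun i => ((![1,1,0] : Fin 3 → ℤ) i : ℝ)) ∈ (2:ℝ) • Pex := by
  rw [two_smul_Pex]
  have h : (fun i => ((![1,1,0] : Fin 3 → ℤ) i : ℝ)) = (![1,0,0] : Fin 3 → ℝ) + ![0,1,0] := by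
    funext i; fin_cases i <;> norm_num
  rw [h]; exact Set.add_mem_add vP1 vP2

lemma m2_111 : (fun i => ((![1,1,1] : Fin 3 → ℤ) i : ℝ)) ∈ (2:ℝ) • Pex := by
  have hm1 : ((1/2:ℝ) • ![1,0,0] + (1/2:ℝ) • ![0,1,0] : Fin 3 → ℝ) ∈ Pex :=
    convex_Pex vP1 vP2 (by norm_num) (by norm_num) (by norm_num)
  have hm2 : ((1/2:ℝ) • ![0,0,0] + (1/2:ℝ) • ![1,1,2] : Fin 3 → ℝ) ∈ Pex :=
    convex_Pex vP0 vP3 (by norm_num) (by norm_num) (by norm_num)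
  have hm : ((1/2:ℝ) • ((1/2:ℝ) • ![1,0,0] + (1/2:ℝ) • ![0,1,0]) + (1/2:ℝ) • ((1/2:ℝ) • ![0,0,0] + (1/2:ℝ) • ![1,1,2]) : Fin 3 → ℝ) ∈ Pex :=
    convex_Pex hm1 hm2 (by norm_num) (by norm_num) (by norm_num)
  have h : (fun i => ((![1,1,1] : Fin 3 → ℤ) i : ℝ)) = (2:ℝ) • ((1/2:ℝ) • ((1/2:ℝ) • ![1,0,0] + (1/2:ℝ) • ![0,1,0]) + (1/2:ℝ) • ((1/2:ℝ) • ![0,0,0] + (1/2:ℝ) • ![1,1,2]) : Fin 3 → ℝ) := by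
    funext i; fin_cases i <;> norm_num
  rw [h]; exact Set.smul_mem_smul_set hm

lemma m2_112 : (fun i => ((![1,1,2] : Fin 3 → ℤ) i : ℝ)) ∈ (2:ℝ) • Pex := by
  rw [two_smul_Pex]
  have h : (fun i => ((![1,1,2] : Fin 3 → ℤ) i : ℝ)) = (![0,0,0] : Fin 3 → ℝ) + ![1,1,2] := by
    funext i; fin_cases i <;> norm_num
  rw [h]; exact Set.add_mem_add vP0 vP3

lemma m2_122 : (fun i => ((![1,2,2] : Fin 3 → ℤ) i : ℝ)) ∈ (2:ℝ) • Pex := by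
  rw [two_smul_Pex]
  have h : (fun i => ((![1,2,2] : Fin 3 → ℤ) i : ℝ)) = (![0,1,0] : Fin 3 → ℝ) + ![1,1,2] := by
    funext i; fin_cases i <;> norm_num
  rw [h]; exact Set.add_mem_add vP2 vP3

lemma m2_200 : (fun i => ((![2,0,0] : Fin 3 → ℤ) i : ℝ)) ∈ (2:ℝ) • Pex := by
  rw [two_smul_Pex]
  have h : (fun i => ((![2,0,0] : Fin 3 → ℤ) i : ℝ)) = (![1,0,0] : Fin 3 → ℝ) + ![1,0,0] := by
    funext i; fin_cases i <;> norm_num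
  rw [h]; exact Set.add_mem_add vP1 vP1

lemma m2_212 : (fun i => ((![2,1,2] : Fin 3 → ℤ) i : ℝ)) ∈ (2:ℝ) • Pex := by
  rw [two_smul_Pex]
  have h : (fun i => ((![2,1,2] : Fin 3 → ℤ) i : ℝ)) = (![1,0,0] : Fin 3 → ℝ) + ![1,1,2] := by
    funext i; fin_cases i <;> norm_num
  rw [h]; exact Set.add_mem_add vP1 vP3

lemma m2_224 : (fun i => ((![2,2,4] : Fin 3 → ℤ) i : ℝ)) ∈ (2:ℝ) • Pex := by
  rw [two_smul_Pex]
  have h : (fun i => ((![2,2,4] : Fin 3 → ℤ) i : ℝ)) = (![1,1,2] : Fin 3 → ℝ) + ![1,1,2] := by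
    funext i; fin_cases i <;> norm_num
  rw [h]; exact Set.add_mem_add vP3 vP3

/-- Every lattice point of `3P` is the sum of a lattice point of `2P` and a lattice point
of `P`: `3P ∩ ℤ³ = (2P ∩ ℤ³) + (P ∩ ℤ³)`. -/
theorem final_example_surjectivity :
    {x : Fin 3 → ℤ | (fun i => (x i : ℝ)) ∈ (3 : ℝ) • Pex} =
      {x : Fin 3 → ℤ | ∃ a b : Fin 3 → ℤ,
        (fun i => (a i : ℝ)) ∈ (2 : ℝ) • Pex ∧ (fun i => (b i : ℝ)) ∈ Pex ∧ x = a + b} := by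
  ext x
  simp only [Set.mem_setOf_eq]
  constructor
  · intro hx
    obtain ⟨p, q, r, rfl⟩ : ∃ p q r : ℤ, x = ![p,q,r] :=
      ⟨x 0, x 1, x 2, by funext i; fin_cases i <;> rfl⟩
    obtain ⟨y, hy, hxy⟩ := hx
    obtain ⟨g1, g2, g3, g4⟩ := Pex_subset hy
    have e0 := congrFun hxy 0
    have e1 := congrFun hxy 1
    have e2 := congrFun hxy 2
    simp only [Pi.smul_apply, smul_eq_mul, Matrix.cons_val_zero, Matrix.cons_val_one,
      Matrix.head_cons, Matrix.cons_val_two, Matrix.tail_cons] at e0 e1 e2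
    have i1 : 0 ≤ r := by exact_mod_cast (by linarith : (0:ℝ) ≤ (r:ℝ))
    have i2 : r ≤ 2*p := by exact_mod_cast (by linarith : (r:ℝ) ≤ 2*(p:ℝ))
    have i3 : r ≤ 2*q := by exact_mod_cast (by linarith : (r:ℝ) ≤ 2*(q:ℝ))
    have i4 : 2*p + 2*q - r ≤ 6 := by
      exact_mod_cast (by linarith : 2*(p:ℝ) + 2*(q:ℝ) - (r:ℝ) ≤ 6)
    have key : 0 ≤ r ∧ r ≤ 2*p ∧ r ≤ 2*q ∧ 2*p + 2*q - r ≤ 6 := ⟨i1, i2, i3, i4⟩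
    clear i2 i3 i4 g1 g2 g3 g4 e0 e1 e2 hy
    have bp1 : 0 ≤ p := by omega
    have bp2 : p ≤ 3 := by omega
    have bq1 : 0 ≤ q := by omega
    have bq2 : q ≤ 3 := by omega
    have br2 : r ≤ 6 := by omega
    interval_cases p
    · interval_cases q
      · interval_cases r
        · exact ⟨![0,0,0], ![0,0,0], m2_000, m1_000, by funext i; fin_cases i <;> norm_num⟩
        · omega
        · omega
        · omega
        · omega
        · omega
        · omega
      · interval_cases r
        · exact ⟨![0,0,0], ![0,1,0], m2_000, m1_010, by funext i; fin_cases i <;> norm_num⟩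
        · omega
        · omega
        · omega
        · omega
        · omega
        · omega
      · interval_cases r
        · exact ⟨![0,1,0], ![0,1,0], m2_010, m1_010, by funext i; fin_cases i <;> norm_num⟩
        · omega
        · omega
        · omega
        · omega
        · omega
        · omega
      · interval_cases r
        · exact ⟨![0,2,0], ![0,1,0], m2_020, m1_010, by funext i; fin_cases i <;> norm_num⟩
        · omega
        · omega
        · omega
        · omega
        · omega
        · omega
    · interval_cases q
      · interval_cases r
        · exact ⟨![0,0,0], ![1,0,0], m2_000, m1_100, by funext i; fin_cases i <;> norm_num⟩
        · omega
        · omega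
        · omega
        · omega
        · omega
        · omega
      · interval_cases r
        · exact ⟨![0,1,0], ![1,0,0], m2_010, m1_100, by funext i; fin_cases i <;> norm_num⟩
        · exact ⟨![1,1,1], ![0,0,0], m2_111, m1_000, by funext i; fin_cases i <;> norm_num⟩
        · exact ⟨![0,0,0], ![1,1,2], m2_000, m1_112, by funext i; fin_cases i <;> norm_num⟩
        · omega
        · omega
        · omega
        · omega
      · interval_cases r
        · exact ⟨![0,2,0], ![1,0,0], m2_020, m1_100, by funext i; fin_cases i <;> norm_num⟩
        · exact ⟨![1,1,1], ![0,1,0], m2_111, m1_010, by funext i; fin_cases i <;> norm_num⟩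
        · exact ⟨![0,1,0], ![1,1,2], m2_010, m1_112, by funext i; fin_cases i <;> norm_num⟩
        · omega
        · omega
        · omega
        · omega
      · interval_cases r
        · omega
        · omega
        · exact ⟨![0,2,0], ![1,1,2], m2_020, m1_112, by funext i; fin_cases i <;> norm_num⟩
        · omega
        · omega
        · omega
        · omega
    · interval_cases q
      · interval_cases r
        · exact ⟨![1,0,0], ![1,0,0], m2_100, m1_100, by funext i; fin_cases i <;> norm_num⟩
        · omega
        · omega
        · omega
        · omega
        · omega
        · omega
      · interval_cases r
        · exact ⟨![1,1,0], ![1,0,0], m2_110, m1_100, by funext i; fin_cases i <;> norm_num⟩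
        · exact ⟨![1,1,1], ![1,0,0], m2_111, m1_100, by funext i; fin_cases i <;> norm_num⟩
        · exact ⟨![1,0,0], ![1,1,2], m2_100, m1_112, by funext i; fin_cases i <;> norm_num⟩
        · omega
        · omega
        · omega
        · omega
      · interval_cases r
        · omega
        · omega
        · exact ⟨![1,1,0], ![1,1,2], m2_110, m1_112, by funext i; fin_cases i <;> norm_num⟩
        · exact ⟨![1,1,1], ![1,1,2], m2_111, m1_112, by funext i; fin_cases i <;> norm_num⟩
        · exact ⟨![1,1,2], ![1,1,2], m2_112, m1_112, by funext i; fin_cases i <;> norm_num⟩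
        · omega
        · omega
      · interval_cases r
        · omega
        · omega
        · omega
        · omega
        · exact ⟨![1,2,2], ![1,1,2], m2_122, m1_112, by funext i; fin_cases i <;> norm_num⟩
        · omega
        · omega
    · interval_cases q
      · interval_cases r
        · exact ⟨![2,0,0], ![1,0,0], m2_200, m1_100, by funext i; fin_cases i <;> norm_num⟩
        · omega
        · omega
        · omega
        · omega
        · omega
        · omega
      · interval_cases r
        · omega
        · omega
        · exact ⟨![2,0,0], ![1,1,2], m2_200, m1_112, by funext i; fin_cases i <;> norm_num⟩
        · omega
        · omega
        · omega
        · omega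
      · interval_cases r
        · omega
        · omega
        · omega
        · omega
        · exact ⟨![2,1,2], ![1,1,2], m2_212, m1_112, by funext i; fin_cases i <;> norm_num⟩
        · omega
        · omega
      · interval_cases r
        · omega
        · omega
        · omega
        · omega
        · omega
        · omega
        · exact ⟨![2,2,4], ![1,1,2], m2_224, m1_112, by funext i; fin_cases i <;> norm_num⟩
  · rintro ⟨a, b, ha, hb, rfl⟩
    have h : (fun i => (((a + b) i : ℤ) : ℝ)) = (fun i => ((a i : ℤ) : ℝ)) + (fun i => ((b i : ℤ) : ℝ)) := by
      funext i; simp only [Pi.add_apply]; push_cast; ring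
    rw [h, three_smul_Pex]
    exact Set.add_mem_add ha hb
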